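/- Let a_1, …, a_G be positive reals, let x_g ∈ ℝ^{N_g} be fixed vectors with ‖x_g‖² = a_g, and let ε_1,…,ε_G be mutually independent mean-zero random vectors with Cov(ε_g) = a_g · I_{N_g}. For Y_g = β x_g + ε_g (β ∈ ℝ fixed), define β̂ = (1/G) Σ_{g=1}^G x_gᵀY_g/a_g and β̂_POLS = (Σ_{g=1}^G x_gᵀY_g)/(Σ_{g=1}^G a_g). Then Var(β̂) = 1/G and Var(β̂_POLS) = (Σ_{g=1}^G a_g²)/(Σ_{g=1}^G a_g)², and Var(β̂) ≤ Var(β̂_POLS), with strict inequality whenever the a_g are not all equal. -/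

import Mathlib

open MeasureTheory ProbabilityTheory
open scoped ENNReal

/-- paper's Result 1, scalar-regressor case.
With `Ω_g = a_g I_{N_g}` and `‖x_g‖² = a_g`, the cluster-average estimator has
variance `1/G`, the pooled OLS estimator has variance `(∑ a_g²)/(∑ a_g)²`, and
`Var(β̂) ≤ Var(β̂_POLS)`, strictly whenever the `a_g` are not all equal. -/
theorem stmt10 {Ωs : Type*} [MeasurableSpace Ωs] (μ : Measure Ωs) [IsProbabilityMeasure μ]
    (G : ℕ) (hG : 1 ≤ G) (N : Fin G → ℕ) (hN : ∀ g, 1 ≤ N g)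
    (a : Fin G → ℝ) (ha : ∀ g, 0 < a g)
    (x : (g : Fin G) → Fin (N g) → ℝ) (hx : ∀ g, ∑ i, (x g i) ^ 2 = a g)
    (β : ℝ)
    (ε : (g : Fin G) → Ωs → (Fin (N g) → ℝ))
    (hmeas : ∀ g, Measurable (ε g))
    (hL2 : ∀ g i, Integrable (fun ω => (ε g ω i) ^ 2) μ)
    (hmean : ∀ g i, ∫ ω, ε g ω i ∂μ = 0)
    (hCov : ∀ g i j, ∫ ω, ε g ω i * ε g ω j ∂μ = if i = j then a g else 0)
    (hindep : iIndepFun ε μ)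
    (betaHat : Ωs → ℝ)
    (hbetaHat : ∀ ω, betaHat ω =
      (G : ℝ)⁻¹ * ∑ g, (∑ i, x g i * (β * x g i + ε g ω i)) / a g)
    (betaPOLS : Ωs → ℝ)
    (hbetaPOLS : ∀ ω, betaPOLS ω =
      (∑ g, ∑ i, x g i * (β * x g i + ε g ω i)) / ∑ g, a g) :
    variance betaHat μ = ((G : ℝ))⁻¹ ∧
    variance betaPOLS μ = (∑ g, (a g) ^ 2) / (∑ g, a g) ^ 2 ∧
    variance betaHat μ ≤ variance betaPOLS μ ∧
    ((∃ g g' : Fin G, a g ≠ a g') → variance betaHat μ < variance betaPOLS μ) := by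
  have hGpos : (0:ℝ) < (G : ℝ) := by exact_mod_cast hG
  have hS1pos : (0:ℝ) < ∑ g, a g := Finset.sum_pos (fun g _ => ha g) ⟨⟨0, hG⟩, Finset.mem_univ _⟩
  set Z : Fin G → Ωs → ℝ := fun g ω => ∑ i, x g i * ε g ω i with hZdef
  have hεmeas : ∀ g i, Measurable (fun ω => ε g ω i) := fun g i =>
    (measurable_pi_apply i).comp (hmeas g)
  have hεL2 : ∀ g i, MemLp (fun ω => ε g ω i) 2 μ := fun g i =>
    (memLp_two_iff_integrable_sq (hεmeas g i).aestronglyMeasurable).2 (hL2 g i)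
  have hZL2 : ∀ g, MemLp (Z g) 2 μ := by
    intro g
    have := memLp_finset_sum' (μ := μ) Finset.univ
      (f := fun (i : Fin (N g)) => fun ω => x g i * ε g ω i)
      (fun i _ => ((hεL2 g i).const_mul (x g i)))
    simpa [Finset.sum_fn] using this
  have hZint : ∀ g, Integrable (Z g) μ := fun g => (hZL2 g).integrable one_le_two
  have h11 : (1 : ℝ≥0∞) / 1 = 1 / 2 + 1 / 2 := by
    rw [ENNReal.div_add_div_same, one_div_one, one_add_one_eq_two,
      ENNReal.div_self (by norm_num : (2:ℝ≥0∞) ≠ 0) (by norm_num : (2:ℝ≥0∞) ≠ ⊤)]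
  have hεmul : ∀ g i j, Integrable (fun ω => ε g ω i * ε g ω j) μ := by
    intro g i j
    have := ((hεL2 g j).smul (hεL2 g i) :
      MemLp ((fun ω => ε g ω i) • (fun ω => ε g ω j)) 1 μ)
    exact
      this.integrable le_rfl
  have hZmul : ∀ g g', Integrable (fun ω => Z g ω * Z g' ω) μ := by
    intro g g'
    have := ((hZL2 g').smul (hZL2 g) : MemLp ((Z g) • (Z g')) 1 μ)
    exact this.integrable le_rfl
  have hZmean : ∀ g, ∫ ω, Z g ω ∂μ = 0 := by
    intro g
    rw [hZdef]
    rw [integral_finset_sum _ (fun i _ => ((hεL2 g i).integrable one_le_two).const_mul _)]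
    simp [integral_const_mul, hmean]
  have hZsq : ∀ g, ∫ ω, Z g ω * Z g ω ∂μ = (a g) ^ 2 := by
    intro g
    have hexp : ∀ ω, Z g ω * Z g ω = ∑ i, ∑ j, (x g i * x g j) * (ε g ω i * ε g ω j) := by
      intro ω
      rw [hZdef]
      rw [Finset.sum_mul_sum]
      exact Finset.sum_congr rfl fun i _ => Finset.sum_congr rfl fun j _ => by ring
    simp_rw [hexp]
    rw [integral_finset_sum _ fun i _ =>
      integrable_finset_sum _ fun j _ => (hεmul g i j).const_mul _]
    have h1 : ∀ i, ∫ ω, ∑ j, (x g i * x g j) * (ε g ω i * ε g ω j) ∂μ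
        = x g i * x g i * a g := by
      intro i
      rw [integral_finset_sum _ fun j _ => (hεmul g i j).const_mul _]
      simp_rw [integral_const_mul, hCov]
      simp [mul_ite, mul_zero, Finset.sum_ite_eq]
    simp_rw [h1]
    rw [← Finset.sum_mul]
    have h2 : ∑ i, x g i * x g i = a g := by
      rw [← hx g]; exact Finset.sum_congr rfl fun i _ => (sq (x g i)).symm
    rw [h2, sq]
  have hZcross : ∀ g g', g ≠ g' → ∫ ω, Z g ω * Z g' ω ∂μ = 0 := by
    intro g g' hne
    have hφ : ∀ g, Measurable (fun v : Fin (N g) → ℝ => ∑ i, x g i * v i) := fun g =>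
      Finset.measurable_sum _ fun i _ => measurable_const.mul (measurable_pi_apply i)
    have hind : IndepFun (Z g) (Z g') μ := (hindep.indepFun hne).comp (hφ g) (hφ g')
    have := hind.integral_mul_eq_mul_integral (hZint g).aestronglyMeasurable (hZint g').aestronglyMeasurable
    simpa [Pi.mul_apply, hZmean] using this
  have hE : ∀ g g', ∫ ω, Z g ω * Z g' ω ∂μ = if g = g' then (a g) ^ 2 else 0 := by
    intro g g'
    by_cases h : g = g'
    · subst h; simp [hZsq g]
    · simp [h, hZcross g g' h]
  -- main variance computation for affine combinations of the Z's
  have hvar : ∀ (c : Fin G → ℝ) (κ : ℝ),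
      variance (fun ω => κ + ∑ g, c g * Z g ω) μ = ∑ g, (c g) ^ 2 * (a g) ^ 2 := by
    intro c κ
    have hWL2 : MemLp (fun ω => ∑ g, c g * Z g ω) 2 μ := by
      have := memLp_finset_sum' (μ := μ) Finset.univ
        (f := fun (g : Fin G) => fun ω => c g * Z g ω)
        (fun g _ => ((hZL2 g).const_mul (c g)))
      simpa [Finset.sum_fn] using this
    have hFL2 : MemLp (fun ω => κ + ∑ g, c g * Z g ω) 2 μ := (memLp_const κ).add hWL2
    have hWint : Integrable (fun ω => ∑ g, c g * Z g ω) μ :=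
      integrable_finset_sum _ fun g _ => (hZint g).const_mul _
    have hEW : ∫ ω, ∑ g, c g * Z g ω ∂μ = 0 := by
      rw [integral_finset_sum _ fun g _ => (hZint g).const_mul _]
      simp [integral_const_mul, hZmean]
    have hEF : ∫ ω, (κ + ∑ g, c g * Z g ω) ∂μ = κ := by
      rw [integral_add (integrable_const κ) hWint, hEW, integral_const]
      simp
    have hsq : ∀ ω, (κ + ∑ g, c g * Z g ω) ^ 2
        = κ ^ 2 + 2 * κ * (∑ g, c g * Z g ω)
          + ∑ g, ∑ g', (c g * c g') * (Z g ω * Z g' ω) := by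
      intro ω
      have h1 : (∑ g, c g * Z g ω) ^ 2 = ∑ g, ∑ g', (c g * c g') * (Z g ω * Z g' ω) := by
        rw [sq, Finset.sum_mul_sum]
        exact Finset.sum_congr rfl fun g _ => Finset.sum_congr rfl fun g' _ => by ring
      rw [add_sq, h1]
    have hEF2 : ∫ ω, (κ + ∑ g, c g * Z g ω) ^ 2 ∂μ
        = κ ^ 2 + ∑ g, (c g) ^ 2 * (a g) ^ 2 := by
      simp_rw [hsq]
      rw [integral_add (by
          exact (integrable_const _).add (hWint.const_mul _))
        (integrable_finset_sum _ fun g _ =>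
          integrable_finset_sum _ fun g' _ => (hZmul g g').const_mul _)]
      rw [integral_add (integrable_const _) (hWint.const_mul _)]
      rw [integral_const, integral_const_mul, hEW]
      have h2 : ∫ ω, ∑ g, ∑ g', (c g * c g') * (Z g ω * Z g' ω) ∂μ
          = ∑ g, (c g) ^ 2 * (a g) ^ 2 := by
        rw [integral_finset_sum _ fun g _ =>
          integrable_finset_sum _ fun g' _ => (hZmul g g').const_mul _]
        have h3 : ∀ g, ∫ ω, ∑ g', (c g * c g') * (Z g ω * Z g' ω) ∂μ
            = (c g) ^ 2 * (a g) ^ 2 := by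
          intro g
          rw [integral_finset_sum _ fun g' _ => (hZmul g g').const_mul _]
          simp_rw [integral_const_mul, hE]
          simp only [mul_ite, mul_zero, Finset.sum_ite_eq, Finset.mem_univ, if_true]
          ring
        exact Finset.sum_congr rfl fun g _ => h3 g
      rw [h2]
      simp
    rw [variance_eq_sub hFL2]
    simp only [Pi.pow_apply]
    rw [hEF2, hEF]
    ring
  -- rewrite the two estimators in the canonical affine form
  have hterm : ∀ g ω, ∑ i, x g i * (β * x g i + ε g ω i) = β * a g + Z g ω := by
    intro g ω
    rw [hZdef]
    simp_rw [mul_add]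
    rw [Finset.sum_add_distrib]
    congr 1
    rw [← hx g, Finset.mul_sum]
    exact Finset.sum_congr rfl fun i _ => by ring
  have hbH : betaHat = fun ω => β + ∑ g, ((G : ℝ)⁻¹ * (a g)⁻¹) * Z g ω := by
    funext ω
    rw [hbetaHat ω]
    simp_rw [hterm]
    have h2 : ∀ g, (β * a g + Z g ω) / a g = β + (a g)⁻¹ * Z g ω := by
      intro g
      rw [add_div, mul_div_assoc, div_self (ha g).ne', mul_one, div_eq_inv_mul]
    simp_rw [h2]
    rw [Finset.sum_add_distrib, mul_add, Finset.sum_const, Finset.card_univ,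
      Fintype.card_fin, nsmul_eq_mul, Finset.mul_sum]
    congr 1
    · field_simp
    · exact Finset.sum_congr rfl fun g _ => by ring
  have hbP : betaPOLS = fun ω => β + ∑ g, (∑ g', a g')⁻¹ * Z g ω := by
    funext ω
    rw [hbetaPOLS ω]
    simp_rw [hterm]
    rw [Finset.sum_add_distrib, ← Finset.mul_sum]
    rw [add_div, mul_div_assoc, div_self hS1pos.ne', mul_one]
    congr 1
    rw [Finset.sum_div]
    exact Finset.sum_congr rfl fun g _ => by rw [div_eq_inv_mul]
  have hVH : variance betaHat μ = ((G : ℝ))⁻¹ := by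
    rw [hbH, hvar]
    have : ∀ g, ((G : ℝ)⁻¹ * (a g)⁻¹) ^ 2 * (a g) ^ 2 = ((G : ℝ) ^ 2)⁻¹ := by
      intro g
      rw [mul_pow, mul_assoc, inv_pow, inv_pow, inv_mul_cancel₀ (pow_ne_zero 2 (ha g).ne'),
        mul_one]
    simp_rw [this]
    rw [Finset.sum_const, Finset.card_univ, Fintype.card_fin, nsmul_eq_mul]
    rw [sq]
    field_simp
  have hVP : variance betaPOLS μ = (∑ g, (a g) ^ 2) / (∑ g, a g) ^ 2 := by
    rw [hbP, hvar]
    rw [← Finset.mul_sum, inv_pow, mul_comm, ← div_eq_mul_inv]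
  -- Cauchy–Schwarz identity
  have key : ∑ g, ∑ g', (a g - a g') ^ 2
      = 2 * ((G : ℝ) * (∑ g, (a g) ^ 2) - (∑ g, a g) ^ 2) := by
    have h1 : ∀ g : Fin G, ∑ g', (a g - a g') ^ 2
        = ((G : ℝ) * (a g) ^ 2 + ∑ g', (a g') ^ 2) - (2 * ∑ g', a g') * a g := by
      intro g
      have he : ∀ g' : Fin G, (a g - a g') ^ 2
          = ((a g) ^ 2 + (a g') ^ 2) - (2 * a g') * a g := fun g' => by ring
      simp_rw [he]
      rw [Finset.sum_sub_distrib, Finset.sum_add_distrib, Finset.sum_const, Finset.card_univ,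
        Fintype.card_fin, nsmul_eq_mul, ← Finset.sum_mul, Finset.mul_sum]
      try ring
    simp_rw [h1]
    rw [Finset.sum_sub_distrib, Finset.sum_add_distrib, ← Finset.mul_sum, ← Finset.mul_sum,
      Finset.sum_const, Finset.card_univ, Fintype.card_fin, nsmul_eq_mul]
    try ring
  have keyle : (∑ g, a g) ^ 2 ≤ (G : ℝ) * ∑ g, (a g) ^ 2 := by
    nlinarith [Finset.sum_nonneg (fun g (_ : g ∈ Finset.univ) =>
      Finset.sum_nonneg (fun g' (_ : g' ∈ Finset.univ) => sq_nonneg (a g - a g'))), key]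
  refine ⟨hVH, hVP, ?_, ?_⟩
  · rw [hVH, hVP, inv_eq_one_div, div_le_div_iff₀ hGpos (by positivity)]
    nlinarith [keyle]
  · rintro ⟨g, g', hgg'⟩
    have hpos : 0 < ∑ g, ∑ g', (a g - a g') ^ 2 := by
      apply Finset.sum_pos'
        (fun g _ => Finset.sum_nonneg fun g' _ => sq_nonneg _)
      refine ⟨g, Finset.mem_univ _, Finset.sum_pos'
        (fun g' _ => sq_nonneg _) ⟨g', Finset.mem_univ _, ?_⟩⟩
      have : a g - a g' ≠ 0 := sub_ne_zero.mpr hgg'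
      positivity
    rw [hVH, hVP, inv_eq_one_div, div_lt_div_iff₀ hGpos (by positivity)]
    nlinarith [key, hpos]
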